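/- Let M ≥ 1, N ≥ 1, 1 ≤ R ≤ min(M, N), σ_e² > 0, σ_ε² > 0, λ_1 ≥ … ≥ λ_R > 0 and ỹ ∈ ℝ^M. Suppose ν* ∈ (−λ_R²/(2σ_e²), M/2] satisfies g(ν*) = 0, and additionally ν* ≥ 0 if R < N. Define z* = 1/(Σ_{j=1}^R σ_e² ỹ_j² λ_j²/(λ_j² + 2ν*σ_e²)² + σ_ε²), w*_j = ỹ_j² λ_j² z*/(λ_j² + 2ν*σ_e²)² for 1 ≤ j ≤ R, and w*_i = 0 for R+1 ≤ i ≤ N. Then (w*, z*) is feasible and minimizes F(w, z) = Σ_{j=1}^R (1/2)(ỹ_j² z + λ_j² w_j − 2|ỹ_j| λ_j √(w_j z)) + (1/2)(Σ_{m=R+1}^M ỹ_m²) z − (M/2) log z over the feasible set D = {(w, z) ∈ ℝ^N × ℝ : w_j ≥ 0 for all j, z > 0, σ_e² Σ_{j=1}^N w_j + σ_ε² z = 1}. -/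

import Mathlib

/-- The lifted maximum-likelihood objective
`F(w, z) = ∑_{j=1}^R (1/2)(ỹ_j² z + λ_j² w_j − 2|ỹ_j| λ_j √(w_j z))
          + (1/2)(∑_{m=R+1}^M ỹ_m²) z − (M/2) log z`. -/
noncomputable def liftedObj (M N R : ℕ) (hRM : R ≤ M) (hRN : R ≤ N)
    (lam : Fin R → ℝ) (y : Fin M → ℝ) (p : (Fin N → ℝ) × ℝ) : ℝ :=
  (∑ j : Fin R, (1/2) * ((y (Fin.castLE hRM j)) ^ 2 * p.2
      + (lam j) ^ 2 * p.1 (Fin.castLE hRN j)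
      - 2 * |y (Fin.castLE hRM j)| * lam j * Real.sqrt (p.1 (Fin.castLE hRN j) * p.2)))
    + (1/2) * (∑ m ∈ Finset.univ.filter (fun m : Fin M => R ≤ (m : ℕ)), (y m) ^ 2) * p.2
    - ((M : ℝ)/2) * Real.log p.2

/-- The feasible set
`D = {(w, z) : w_j ≥ 0 for all j, z > 0, σ_e² ∑_{j=1}^N w_j + σ_ε² z = 1}`. -/
def feasSet (N : ℕ) (se seps : ℝ) : Set ((Fin N → ℝ) × ℝ) :=
  {p | (∀ j, 0 ≤ p.1 j) ∧ 0 < p.2 ∧ se * (∑ j : Fin N, p.1 j) + seps * p.2 = 1}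

/-- The scalar dual function `g`. -/
noncomputable def gFun (M R : ℕ) (hRM : R ≤ M) (se seps : ℝ)
    (lam : Fin R → ℝ) (y : Fin M → ℝ) (ν : ℝ) : ℝ :=
  (∑ j : Fin R, (y (Fin.castLE hRM j)) ^ 2 * ν * se / ((lam j) ^ 2 + 2 * ν * se))
    + (1/2) * (∑ m ∈ Finset.univ.filter (fun m : Fin M => R ≤ (m : ℕ)), (y m) ^ 2)
    - ((M : ℝ)/2) * ((∑ j : Fin R, se * (y (Fin.castLE hRM j)) ^ 2 * (lam j) ^ 2
        / ((lam j) ^ 2 + 2 * ν * se) ^ 2) + seps)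
    + ν * seps

lemma amgm_sqrt (a b : ℝ) (ha : 0 ≤ a) (hb : 0 ≤ b) :
    Real.sqrt (a * b) ≤ (a + b) / 2 := by
  rw [Real.sqrt_mul ha]
  nlinarith [Real.sq_sqrt ha, Real.sq_sqrt hb, Real.sqrt_nonneg a, Real.sqrt_nonneg b,
    sq_nonneg (Real.sqrt a - Real.sqrt b)]

lemma perj (se ν lamj Yj w z : ℝ) (hlam : 0 < lamj)
    (hd : 0 < lamj^2 + 2*ν*se) (hw : 0 ≤ w) (hz : 0 ≤ z) :
    Yj^2*ν*se*z/(lamj^2+2*ν*se) ≤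
      1/2 * (Yj ^ 2 * z + lamj ^ 2 * w - 2 * |Yj| * lamj * Real.sqrt (w * z)) + ν*se*w := by
  have h1 := amgm_sqrt ((lamj^2+2*ν*se)*w) (Yj^2*lamj^2*z/(lamj^2+2*ν*se))
    (by positivity) (by positivity)
  have h2 : ((lamj^2+2*ν*se)*w) * (Yj^2*lamj^2*z/(lamj^2+2*ν*se)) = (|Yj| * lamj)^2 * (w*z) := by
    rw [mul_pow, sq_abs]
    field_simp
  have h3 : Real.sqrt ((|Yj| * lamj)^2*(w*z)) = |Yj| * lamj*Real.sqrt (w*z) := by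
    rw [Real.sqrt_mul (by positivity), Real.sqrt_sq (by positivity)]
  rw [h2, h3] at h1
  have h4 : 1/2*(Yj^2*z + lamj^2*w) + ν*se*w - Yj^2*ν*se*z/(lamj^2+2*ν*se)
      = ((lamj^2+2*ν*se)*w + Yj^2*lamj^2*z/(lamj^2+2*ν*se))/2 := by
    field_simp
    ring
  nlinarith [h1, h4]

lemma perj_eq (se ν lamj Yj z : ℝ) (hlam : 0 < lamj)
    (hd : 0 < lamj^2 + 2*ν*se) (hz : 0 ≤ z) :
    1/2 * (Yj ^ 2 * z + lamj ^ 2 * (Yj^2*lamj^2*z/(lamj^2+2*ν*se)^2)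
        - 2 * |Yj| * lamj * Real.sqrt ((Yj^2*lamj^2*z/(lamj^2+2*ν*se)^2) * z))
      + ν*se*(Yj^2*lamj^2*z/(lamj^2+2*ν*se)^2)
      = Yj^2*ν*se*z/(lamj^2+2*ν*se) := by
  have hs : Real.sqrt ((Yj^2*lamj^2*z/(lamj^2+2*ν*se)^2)*z) = |Yj| * lamj*z/(lamj^2+2*ν*se) := by
    have e : (Yj^2*lamj^2*z/(lamj^2+2*ν*se)^2)*z = (|Yj| * lamj*z/(lamj^2+2*ν*se))^2 := by
      rw [div_pow, mul_pow, mul_pow, sq_abs]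
      ring
    rw [e, Real.sqrt_sq (by positivity)]
  rw [hs]
  have habs : |Yj| * |Yj| = Yj*Yj := abs_mul_abs_self Yj
  have h2 : 2 * |Yj| * lamj * (|Yj| * lamj * z / (lamj ^ 2 + 2 * ν * se))
      = 2 * Yj ^ 2 * lamj ^ 2 * z / (lamj ^ 2 + 2 * ν * se) := by
    field_simp
    linear_combination z * habs
  rw [h2]
  field_simp
  ring

lemma sum_split {N R : ℕ} (hRN : R ≤ N) (v : Fin N → ℝ) :
    ∑ i : Fin N, v i = (∑ j : Fin R, v (Fin.castLE hRN j))
      + ∑ k ∈ Finset.Ico R N, (if h : k < N then v ⟨k, h⟩ else 0) := by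
  classical
  have h1 : ∑ i : Fin N, v i = ∑ k ∈ Finset.range N, (if h : k < N then v ⟨k, h⟩ else 0) := by
    rw [← Fin.sum_univ_eq_sum_range]
    exact Finset.sum_congr rfl fun i _ => by simp
  have h2 : ∑ j : Fin R, v (Fin.castLE hRN j)
      = ∑ k ∈ Finset.range R, (if h : k < N then v ⟨k, h⟩ else 0) := by
    rw [← Fin.sum_univ_eq_sum_range]
    refine Finset.sum_congr rfl fun j _ => ?_
    rw [dif_pos (lt_of_lt_of_le j.isLt hRN)]
    rfl
  rw [h1, h2, Finset.range_eq_Ico, Finset.range_eq_Ico]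
  exact (Finset.sum_Ico_consecutive (fun k => if h : k < N then v ⟨k, h⟩ else 0) (Nat.zero_le R) hRN).symm

set_option maxHeartbeats 1600000 in
/-- Global optimality of the KKT point obtained from a root `ν* ∈ (−λ_R²/(2σ_e²), M/2]`
of `g` (with `ν* ≥ 0` when `R < N`): the point `(w*, z*)` with
`z* = 1/(∑_j σ_e² ỹ_j² λ_j²/(λ_j² + 2ν*σ_e²)² + σ_ε²)`,
`w*_j = ỹ_j² λ_j² z*/(λ_j² + 2ν*σ_e²)²` for `j ≤ R` and `w*_i = 0` for `i > R`,
is feasible and minimizes the lifted objective over the feasible set. -/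
theorem stmt_15 (M N R : ℕ) (hM : 1 ≤ M) (hN : 1 ≤ N) (hR : 1 ≤ R)
    (hRM : R ≤ M) (hRN : R ≤ N)
    (se seps : ℝ) (hse : 0 < se) (hseps : 0 < seps)
    (lam : Fin R → ℝ) (hlam : ∀ j, 0 < lam j)
    (hord : ∀ i j : Fin R, i ≤ j → lam j ≤ lam i)
    (y : Fin M → ℝ) (ν : ℝ)
    (hν : ν ∈ Set.Ioc (-(lam ⟨R - 1, by omega⟩) ^ 2 / (2 * se)) ((M : ℝ)/2))
    (hroot : gFun M R hRM se seps lam y ν = 0)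
    (hν0 : R < N → 0 ≤ ν)
    (zstar : ℝ)
    (hz : zstar = 1 / ((∑ j : Fin R, se * (y (Fin.castLE hRM j)) ^ 2 * (lam j) ^ 2
        / ((lam j) ^ 2 + 2 * ν * se) ^ 2) + seps))
    (wstar : Fin N → ℝ)
    (hwhead : ∀ (i : Fin N) (h : (i : ℕ) < R),
      wstar i = (y (Fin.castLE hRM ⟨(i : ℕ), h⟩)) ^ 2 * (lam ⟨(i : ℕ), h⟩) ^ 2 * zstar
        / ((lam ⟨(i : ℕ), h⟩) ^ 2 + 2 * ν * se) ^ 2)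
    (hwtail : ∀ i : Fin N, R ≤ (i : ℕ) → wstar i = 0) :
    (wstar, zstar) ∈ feasSet N se seps ∧
    ∀ p ∈ feasSet N se seps,
      liftedObj M N R hRM hRN lam y (wstar, zstar) ≤ liftedObj M N R hRM hRN lam y p := by
  obtain ⟨hν1, hν2⟩ := hν
  unfold gFun at hroot
  have hMpos : (0:ℝ) < (M:ℝ) := by exact_mod_cast Nat.lt_of_lt_of_le Nat.zero_lt_one hM
  -- positivity of denominators
  have hd : ∀ j : Fin R, 0 < (lam j) ^ 2 + 2 * ν * se := by
    intro j
    have hle : lam ⟨R - 1, by omega⟩ ≤ lam j := by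
      refine hord j ⟨R - 1, by omega⟩ ?_
      have := j.isLt
      simp only [Fin.le_def]
      omega
    have hlamj := hlam j
    have hlamR := hlam ⟨R - 1, by omega⟩
    have h2 : -(lam ⟨R - 1, by omega⟩) ^ 2 < ν * (2 * se) := by
      have := (div_lt_iff₀ (by positivity : (0:ℝ) < 2 * se)).mp hν1
      linarith
    nlinarith
  set T : ℝ := ∑ j : Fin R, se * (y (Fin.castLE hRM j)) ^ 2 * (lam j) ^ 2
      / ((lam j) ^ 2 + 2 * ν * se) ^ 2 with hTdef
  set S : ℝ := ∑ m ∈ Finset.univ.filter (fun m : Fin M => R ≤ (m : ℕ)), (y m) ^ 2 with hSdef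
  set Q : ℝ := ∑ j : Fin R, (y (Fin.castLE hRM j)) ^ 2 * ν * se
      / ((lam j) ^ 2 + 2 * ν * se) with hQdef
  have hT : 0 ≤ T := by
    rw [hTdef]
    refine Finset.sum_nonneg fun j _ => ?_
    have := hd j
    positivity
  have hTs : 0 < T + seps := by linarith
  have hzpos : 0 < zstar := by rw [hz]; positivity
  set A : ℝ := Q + 1/2 * S + ν * seps with hAdef
  have hA : A = (M : ℝ) / 2 * (T + seps) := by
    rw [hAdef]; linarith [hroot]
  have hAz : A * zstar = (M : ℝ) / 2 := by
    rw [hA, hz]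
    field_simp
  have hApos : 0 < A := by
    rw [hA]; positivity
  -- nonnegativity of wstar
  have hwnn : ∀ i, 0 ≤ wstar i := by
    intro i
    by_cases h : (i : ℕ) < R
    · rw [hwhead i h]
      have := hd ⟨(i : ℕ), h⟩
      positivity
    · exact (hwtail i (by omega)).symm.le
  -- sum of wstar
  have hw' : ∀ j : Fin R, wstar (Fin.castLE hRN j)
      = (y (Fin.castLE hRM j)) ^ 2 * (lam j) ^ 2 * zstar / ((lam j) ^ 2 + 2 * ν * se) ^ 2 :=
    fun j => hwhead (Fin.castLE hRN j) (by simpa using j.isLt)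
  have hsumw : ∑ i : Fin N, wstar i
      = ∑ j : Fin R, (y (Fin.castLE hRM j)) ^ 2 * (lam j) ^ 2 * zstar
          / ((lam j) ^ 2 + 2 * ν * se) ^ 2 := by
    rw [sum_split hRN]
    have t0 : (∑ k ∈ Finset.Ico R N, (if h : k < N then wstar ⟨k, h⟩ else 0)) = 0 := by
      refine Finset.sum_eq_zero fun k hk => ?_
      rw [Finset.mem_Ico] at hk
      rw [dif_pos hk.2]
      exact hwtail ⟨k, hk.2⟩ hk.1
    rw [t0, add_zero]
    exact Finset.sum_congr rfl fun j _ => hw' j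
  have hkeyT : se * (∑ j : Fin R, (y (Fin.castLE hRM j)) ^ 2 * (lam j) ^ 2 * zstar
      / ((lam j) ^ 2 + 2 * ν * se) ^ 2) = T * zstar := by
    rw [hTdef, Finset.sum_mul, Finset.mul_sum]
    exact Finset.sum_congr rfl fun j _ => by ring
  have hfe : se * (∑ i : Fin N, wstar i) + seps * zstar = 1 := by
    rw [hsumw, hkeyT, hz]
    field_simp
  -- lower bound on objective over feasible set
  have hlow : ∀ p ∈ feasSet N se seps,
      A * p.2 - (M : ℝ) / 2 * Real.log p.2 - ν ≤ liftedObj M N R hRM hRN lam y p := by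
    rintro ⟨w, z⟩ ⟨hwp, hzp, hc⟩
    simp only [liftedObj, ← hSdef]
    dsimp only at hwp hzp hc ⊢
    have hsplit := sum_split hRN w
    set tail := ∑ k ∈ Finset.Ico R N, (if h : k < N then w ⟨k, h⟩ else 0) with htaildef
    have htail0 : 0 ≤ ν * (se * tail) := by
      rcases lt_or_eq_of_le hRN with h | h
      · have hνnn := hν0 h
        have ht : 0 ≤ tail := by
          rw [htaildef]
          refine Finset.sum_nonneg fun k hk => ?_
          rw [Finset.mem_Ico] at hk
          rw [dif_pos hk.2]
          exact hwp _
        positivity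
      · have : Finset.Ico R N = ∅ := by rw [h]; exact Finset.Ico_self N
        rw [htaildef, this, Finset.sum_empty, mul_zero, mul_zero]
    have hsum1 : ∑ j : Fin R, (y (Fin.castLE hRM j)) ^ 2 * ν * se * z / ((lam j) ^ 2 + 2 * ν * se)
        ≤ ∑ j : Fin R, (1/2 * ((y (Fin.castLE hRM j)) ^ 2 * z
            + (lam j) ^ 2 * w (Fin.castLE hRN j)
            - 2 * |y (Fin.castLE hRM j)| * lam j * Real.sqrt (w (Fin.castLE hRN j) * z))
          + ν * se * w (Fin.castLE hRN j)) :=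
      Finset.sum_le_sum fun j _ =>
        perj se ν (lam j) (y (Fin.castLE hRM j)) (w (Fin.castLE hRN j)) z
          (hlam j) (hd j) (hwp _) hzp.le
    have hsum2 : ∑ j : Fin R, (1/2 * ((y (Fin.castLE hRM j)) ^ 2 * z
            + (lam j) ^ 2 * w (Fin.castLE hRN j)
            - 2 * |y (Fin.castLE hRM j)| * lam j * Real.sqrt (w (Fin.castLE hRN j) * z))
          + ν * se * w (Fin.castLE hRN j))
        = (∑ j : Fin R, 1/2 * ((y (Fin.castLE hRM j)) ^ 2 * z
            + (lam j) ^ 2 * w (Fin.castLE hRN j)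
            - 2 * |y (Fin.castLE hRM j)| * lam j * Real.sqrt (w (Fin.castLE hRN j) * z)))
          + ν * se * (∑ j : Fin R, w (Fin.castLE hRN j)) := by
      rw [Finset.sum_add_distrib, Finset.mul_sum]
    have hQz : Q * z = ∑ j : Fin R, (y (Fin.castLE hRM j)) ^ 2 * ν * se * z
        / ((lam j) ^ 2 + 2 * ν * se) := by
      rw [hQdef, Finset.sum_mul]
      exact Finset.sum_congr rfl fun j _ => by ring
    have hcon : se * ((∑ j : Fin R, w (Fin.castLE hRN j)) + tail) + seps * z = 1 := by
      rw [← hsplit]; exact hc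
    have hwsum : ν * se * (∑ j : Fin R, w (Fin.castLE hRN j))
        = ν - ν * seps * z - ν * (se * tail) := by
      have h1 : se * (∑ j : Fin R, w (Fin.castLE hRN j)) = 1 - seps * z - se * tail := by
        linarith [hcon]
      calc ν * se * (∑ j : Fin R, w (Fin.castLE hRN j))
          = ν * (se * (∑ j : Fin R, w (Fin.castLE hRN j))) := by ring
        _ = ν * (1 - seps * z - se * tail) := by rw [h1]
        _ = ν - ν * seps * z - ν * (se * tail) := by ring
    have hAzz : A * z = Q * z + 1/2 * S * z + ν * seps * z := by
      rw [hAdef]; ring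
    rw [hQz] at hAzz
    rw [hsum2, hwsum] at hsum1
    -- goal : A*z - M/2 log z - ν ≤  Σ + 1/2*S*z - M/2 log z
    linarith [hsum1, hAzz, htail0]
  -- value at the candidate point
  have hstar : liftedObj M N R hRM hRN lam y (wstar, zstar)
      = A * zstar - (M : ℝ) / 2 * Real.log zstar - ν := by
    simp only [liftedObj, ← hSdef]
    have e1 : ∀ j : Fin R, 1/2 * ((y (Fin.castLE hRM j)) ^ 2 * zstar
          + (lam j) ^ 2 * wstar (Fin.castLE hRN j)
          - 2 * |y (Fin.castLE hRM j)| * lam j * Real.sqrt (wstar (Fin.castLE hRN j) * zstar))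
        = (y (Fin.castLE hRM j)) ^ 2 * ν * se * zstar / ((lam j) ^ 2 + 2 * ν * se)
          - ν * se * wstar (Fin.castLE hRN j) := by
      intro j
      rw [hw' j]
      have := perj_eq se ν (lam j) (y (Fin.castLE hRM j)) zstar (hlam j) (hd j) hzpos.le
      linarith [this]
    rw [Finset.sum_congr rfl fun j _ => e1 j, Finset.sum_sub_distrib, ← Finset.mul_sum]
    have hQz : Q * zstar = ∑ j : Fin R, (y (Fin.castLE hRM j)) ^ 2 * ν * se * zstar
        / ((lam j) ^ 2 + 2 * ν * se) := by
      rw [hQdef, Finset.sum_mul]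
      exact Finset.sum_congr rfl fun j _ => by ring
    have hRsum : (∑ j : Fin R, wstar (Fin.castLE hRN j)) = ∑ i : Fin N, wstar i := by
      rw [hsumw]
      exact Finset.sum_congr rfl fun j _ => hw' j
    have hwsum : ν * se * (∑ j : Fin R, wstar (Fin.castLE hRN j)) = ν - ν * seps * zstar := by
      have h1 : se * (∑ j : Fin R, wstar (Fin.castLE hRN j)) = 1 - seps * zstar := by
        rw [hRsum]; linarith [hfe]
      calc ν * se * (∑ j : Fin R, wstar (Fin.castLE hRN j))
          = ν * (se * (∑ j : Fin R, wstar (Fin.castLE hRN j))) := by ring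
        _ = ν * (1 - seps * zstar) := by rw [h1]
        _ = ν - ν * seps * zstar := by ring
    have hAzz : A * zstar = Q * zstar + 1/2 * S * zstar + ν * seps * zstar := by
      rw [hAdef]; ring
    rw [hQz] at hAzz
    rw [hwsum]
    linarith [hAzz]
  refine ⟨⟨hwnn, hzpos, hfe⟩, ?_⟩
  intro p hp
  have h1 := hlow p hp
  have hpz : 0 < p.2 := hp.2.1
  have hlog : Real.log p.2 - Real.log zstar ≤ p.2 / zstar - 1 := by
    rw [← Real.log_div hpz.ne' hzpos.ne']
    exact Real.log_le_sub_one_of_pos (by positivity)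
  have hmul : (M : ℝ) / 2 * (Real.log p.2 - Real.log zstar)
      ≤ (M : ℝ) / 2 * (p.2 / zstar - 1) :=
    mul_le_mul_of_nonneg_left hlog (by positivity)
  have heq : (M : ℝ) / 2 * (p.2 / zstar - 1) = A * p.2 - A * zstar := by
    rw [← hAz]
    field_simp
  rw [hstar]
  linarith [h1, hmul, heq]
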